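/- Let Z ⊆ E(G)∖R be such that: for every red arc (u,v) ∈ R there is no directed path from v to u in G − Z; the vertices x_1,…,x_m lie in pairwise distinct strong components of G − Z; and for all 1 ≤ i < j ≤ m there is no directed path from x_j to x_i in G − Z. Then, setting Z' = ⋃_{e ∈ Z} B_e (all 2m+1 copies of each arc of Z), the graph H − Z' has no directed path from s to t. -/

import Mathlib

/-!
STATEMENT 4: the forward direction of the correctness of the reduction from
Directed Subset Feedback Edge Set to Bundled Cut.

Setup: `G` is a finite digraph with arc set `E`, red arcs `R ⊆ E`, and distinct
vertices `x 1, …, x m`.  The digraph `H` has vertices `src`, `snk`, and `node u a`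
for `u ∈ V` and `1 ≤ a ≤ 2m+1` (the `a`-th copy `u^a` of `u`), with arcs:
`(u^a, v^a)` for `(u,v) ∈ E` and `1 ≤ a ≤ 2m+1`; `(u^b, u^a)` for `1 ≤ a < b ≤ 2m+1`;
`(u^{2a}, v^{2a+1})` for `(u,v) ∈ R` and `1 ≤ a ≤ m`; `(src, (x a)^b)` whenever
`1 ≤ a ≤ m`, `1 ≤ b ≤ 2m+1` and `2a ≥ b`; and `((x a)^b, snk)` whenever `2a < b`.
For `e ∈ E ∖ R`, the bundle `B_e` consists of the `2m+1` copies of `e`.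

Claim: if `Z ⊆ E ∖ R` is such that for every `(u,v) ∈ R` there is no path from `v`
to `u` in `G − Z`, the vertices `x 1, …, x m` lie in pairwise distinct strong
components of `G − Z`, and for `i < j` there is no path from `x j` to `x i` in
`G − Z`, then `H − ⋃_{e ∈ Z} B_e` has no path from `src` to `snk`.
-/

variable {V : Type*}

/-- Directed reachability (existence of a directed path/walk) along arcs of `E`. -/
def dReach (E : Set (V × V)) : V → V → Prop :=
  Relation.ReflTransGen fun a b => (a, b) ∈ E

/-- The vertices of `H`: a source, a sink, and the copies `u^a` of vertices of `G`. -/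
inductive DV (V : Type*) where
  | src : DV V
  | snk : DV V
  | node : V → ℕ → DV V

/-- The arcs of the digraph `H`. -/
inductive DAdj (E R : Set (V × V)) (x : ℕ → V) (m : ℕ) : DV V → DV V → Prop where
  /-- the copy `(u^a, v^a)` of an arc `(u,v) ∈ E`, for `1 ≤ a ≤ 2m+1` -/
  | copy {u v : V} {a : ℕ} : (u, v) ∈ E → 1 ≤ a → a ≤ 2 * m + 1 →
      DAdj E R x m (.node u a) (.node v a)
  /-- the arc `(u^b, u^a)` for `1 ≤ a < b ≤ 2m+1` -/
  | down {u : V} {a b : ℕ} : 1 ≤ a → a < b → b ≤ 2 * m + 1 →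
      DAdj E R x m (.node u b) (.node u a)
  /-- the arc `(u^{2a}, v^{2a+1})` for a red arc `(u,v) ∈ R` and `1 ≤ a ≤ m` -/
  | red {u v : V} {a : ℕ} : (u, v) ∈ R → 1 ≤ a → a ≤ m →
      DAdj E R x m (.node u (2 * a)) (.node v (2 * a + 1))
  /-- the arc `(src, (x a)^b)` for `1 ≤ a ≤ m`, `1 ≤ b ≤ 2m+1`, `2a ≥ b` -/
  | fromS {a b : ℕ} : 1 ≤ a → a ≤ m → 1 ≤ b → b ≤ 2 * m + 1 → b ≤ 2 * a →
      DAdj E R x m .src (.node (x a) b)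
  /-- the arc `((x a)^b, snk)` for `1 ≤ a ≤ m`, `1 ≤ b ≤ 2m+1`, `2a < b` -/
  | toT {a b : ℕ} : 1 ≤ a → a ≤ m → 1 ≤ b → b ≤ 2 * m + 1 → 2 * a < b →
      DAdj E R x m (.node (x a) b) .snk

/-- The union of the bundles `B_e` over `e ∈ Z`: all `2m+1` copies of each arc of `Z`. -/
def bundleUnion (m : ℕ) (Z : Set (V × V)) : Set (DV V × DV V) :=
  {p | ∃ e ∈ Z, ∃ a : ℕ, 1 ≤ a ∧ a ≤ 2 * m + 1 ∧ p = (.node e.1 a, .node e.2 a)}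

/-- The invariant maintained along any path from `src` in `H − Z'`. -/
def SfesInv (E Z : Set (V × V)) (x : ℕ → V) (m : ℕ) (w : DV V) : Prop :=
  ∃ u c i, w = DV.node u c ∧ 1 ≤ i ∧ i ≤ m ∧ dReach (E \ Z) (x i) u ∧
    (c ≤ 2 * i ∨ (c ≤ 2 * i + 1 ∧ ¬ dReach (E \ Z) u (x i)))

theorem stmt_4 [Fintype V] (E R : Set (V × V)) (hR : R ⊆ E)
    (m : ℕ) (x : ℕ → V)
    -- `x 1, …, x m` are pairwise distinct vertices
    (hxdist : ∀ i j : ℕ, 1 ≤ i → i < j → j ≤ m → x i ≠ x j)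
    (Z : Set (V × V)) (hZ : Z ⊆ E \ R)
    -- for every red arc `(u,v)` there is no path from `v` to `u` in `G − Z`
    (hred : ∀ p ∈ R, ¬ dReach (E \ Z) p.2 p.1)
    -- the `x i` lie in pairwise distinct strong components of `G − Z`
    (hscc : ∀ i j : ℕ, 1 ≤ i → i ≤ m → 1 ≤ j → j ≤ m → i ≠ j →
      ¬ (dReach (E \ Z) (x i) (x j) ∧ dReach (E \ Z) (x j) (x i)))
    -- for `i < j` there is no path from `x j` to `x i` in `G − Z`
    (horder : ∀ i j : ℕ, 1 ≤ i → i < j → j ≤ m → ¬ dReach (E \ Z) (x j) (x i)) :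
    -- `H − ⋃_{e ∈ Z} B_e` has no directed path from `src` to `snk`
    ¬ Relation.ReflTransGen
        (fun p q => DAdj E R x m p q ∧ (p, q) ∉ bundleUnion m Z)
        DV.src DV.snk := by
  intro hpath
  have key : ∀ w, Relation.ReflTransGen
      (fun p q => DAdj E R x m p q ∧ (p, q) ∉ bundleUnion m Z) DV.src w →
      w = DV.src ∨ SfesInv E Z x m w := by
    intro w hw
    induction hw with
    | refl => exact Or.inl rfl
    | @tail b c hbc hstep ih =>
      obtain ⟨hadj, hnb⟩ := hstep
      cases hadj with
      | @copy u v a huv ha1 ha2 =>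
        rcases ih with h | ⟨u', c', i, heq, hi1, hi2, hr, hcase⟩
        · exact absurd h (by simp)
        injection heq with e1 e2
        subst e1; subst e2
        have hvZ : (u, v) ∈ E \ Z :=
          ⟨huv, fun hz => hnb ⟨(u, v), hz, a, ha1, ha2, rfl⟩⟩
        refine Or.inr ⟨v, a, i, rfl, hi1, hi2, hr.tail hvZ, ?_⟩
        rcases hcase with h | ⟨hl, hnr⟩
        · exact Or.inl h
        · exact Or.inr ⟨hl, fun hv => hnr (Relation.ReflTransGen.head hvZ hv)⟩
      | @down u a' b' ha1 hab hb2 =>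
        rcases ih with h | ⟨u', c', i, heq, hi1, hi2, hr, hcase⟩
        · exact absurd h (by simp)
        injection heq with e1 e2
        subst e1; subst e2
        refine Or.inr ⟨u, a', i, rfl, hi1, hi2, hr, ?_⟩
        rcases hcase with h | ⟨hl, hnr⟩
        · exact Or.inl (by omega)
        · exact Or.inr ⟨by omega, hnr⟩
      | @red u v a huv ha1 ham =>
        rcases ih with h | ⟨u', c', i, heq, hi1, hi2, hr, hcase⟩
        · exact absurd h (by simp)
        injection heq with e1 e2
        subst e1; subst e2
        have hredZ : (u, v) ∈ E \ Z :=
          ⟨hR huv, fun hz => (hZ hz).2 huv⟩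
        refine Or.inr ⟨v, 2 * a + 1, i, rfl, hi1, hi2, hr.tail hredZ, Or.inr ⟨?_, ?_⟩⟩
        · rcases hcase with h | ⟨hl, _⟩ <;> omega
        · intro hv
          rcases hcase with h | ⟨hl, hnr⟩
          · exact hred (u, v) huv (hv.trans hr)
          · exact hnr (Relation.ReflTransGen.head hredZ hv)
      | @fromS a b' ha1 ham hb1 hb2 hba =>
        exact Or.inr ⟨x a, b', a, rfl, ha1, ham, Relation.ReflTransGen.refl, Or.inl hba⟩
      | @toT a b' ha1 ham hb1 hb2 hab =>
        rcases ih with h | ⟨u', c', i, heq, hi1, hi2, hr, hcase⟩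
        · exact absurd h (by simp)
        injection heq with e1 e2
        subst e1; subst e2
        exfalso
        rcases hcase with h | ⟨hl, hnr⟩
        · exact horder a i ha1 (by omega) hi2 hr
        · rcases eq_or_lt_of_le (show a ≤ i by omega) with he | hlt
          · subst he; exact hnr Relation.ReflTransGen.refl
          · exact horder a i ha1 hlt hi2 hr
  rcases key DV.snk hpath with h | ⟨u, c, i, heq, _⟩
  · exact nomatch h
  · exact nomatch heq
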